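/- Every exponential $e^{ikt}$ with $|k| \le n$ can be written as a linear combination of the translates $\varphi_n(\cdot - 2\pi j/(2n+1))$, $j = -n,\ldots,n$, with coefficients $\frac{1}{(2n+1)\cos(k\pi/(2n+2))} e^{2\pi i jk/(2n+1)}$. -/

import Mathlib

open Complex Real

/-- The localized trigonometric polynomial `φ_n(t) = ∑_{k=-n}^n e^{ikt} cos(kπ/(2n+2))`. -/
noncomputable def phi (n : ℕ) (t : ℝ) : ℂ :=
  ∑ k ∈ Finset.Icc (-(n : ℤ)) (n : ℤ),
    Complex.exp (Complex.I * (k : ℂ) * (t : ℂ)) *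
      ((Real.cos (((k : ℝ) * Real.pi) / (2*(n : ℝ)+2))) : ℂ)

lemma roots_sum (n : ℕ) (d : ℤ) (hd : d ≠ 0) (hd2 : d.natAbs ≤ 2*n) :
    ∑ j ∈ Finset.Icc (-(n:ℤ)) (n:ℤ), Complex.exp (2*(π:ℂ)*Complex.I*(j:ℂ)*(d:ℂ)/(2*(n:ℂ)+1)) = 0 := by
  set ζ : ℂ := Complex.exp (2*(π:ℂ)*Complex.I*(d:ℂ)/(2*(n:ℂ)+1)) with hζ
  have hne : (2*(n:ℂ)+1) ≠ 0 := by
    have : ((2*n+1 : ℕ) : ℂ) ≠ 0 := Nat.cast_ne_zero.mpr (by omega)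
    convert this using 1; push_cast; ring
  have hζ0 : ζ ≠ 0 := Complex.exp_ne_zero _
  have hterm : ∀ j : ℤ, Complex.exp (2*(π:ℂ)*Complex.I*(j:ℂ)*(d:ℂ)/(2*(n:ℂ)+1)) = ζ ^ j := by
    intro j
    rw [hζ, ← Complex.exp_int_mul]
    ring_nf
  have hc : (2*(π:ℂ)*Complex.I) ≠ 0 := by
    simp [Real.pi_ne_zero, Complex.I_ne_zero, Complex.ofReal_ne_zero]
  have hζ1 : ζ ≠ 1 := by
    rw [hζ]
    intro h1
    rw [Complex.exp_eq_one_iff] at h1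
    obtain ⟨m, hm⟩ := h1
    have h2 : (d:ℂ) = m * (2*(n:ℂ)+1) := by
      rw [div_eq_iff hne] at hm
      apply mul_left_cancel₀ hc
      linear_combination hm
    have h3 : d = m * (2*n+1) := by exact_mod_cast h2
    have hm0 : m ≠ 0 := by rintro rfl; simp at h3; exact hd h3
    have : d.natAbs = m.natAbs * (2*n+1) := by rw [h3, Int.natAbs_mul]; simp [Int.natAbs_natCast]; omega
    have hm1 : 1 ≤ m.natAbs := Int.natAbs_pos.mpr hm0
    nlinarith
  have hpow : ζ ^ (2*n+1) = 1 := by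
    rw [hζ, ← Complex.exp_nat_mul]
    rw [show ((2*n+1 : ℕ):ℂ) * (2*(π:ℂ)*Complex.I*(d:ℂ)/(2*(n:ℂ)+1)) = (d:ℂ) * (2*(π:ℂ)*Complex.I) by
      push_cast; field_simp]
    exact Complex.exp_int_mul_two_pi_mul_I d
  calc ∑ j ∈ Finset.Icc (-(n:ℤ)) (n:ℤ), Complex.exp (2*(π:ℂ)*Complex.I*(j:ℂ)*(d:ℂ)/(2*(n:ℂ)+1))
      = ∑ j ∈ Finset.Icc (-(n:ℤ)) (n:ℤ), ζ ^ j := by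
        exact Finset.sum_congr rfl fun j _ => hterm j
    _ = ∑ i ∈ Finset.range (2*n+1), ζ ^ (-(n:ℤ)) * ζ ^ i := by
        apply Finset.sum_nbij' (i := fun j : ℤ => (j + n).toNat) (j := fun i : ℕ => (i:ℤ) - n)
        · intro a ha; simp only [Finset.mem_Icc] at ha; simp only [Finset.mem_range]; omega
        · intro a ha; simp only [Finset.mem_range] at ha; simp only [Finset.mem_Icc]; omega
        · intro a ha; simp only [Finset.mem_Icc] at ha; omega
        · intro a ha; simp only [Finset.mem_range] at ha; omega
        · intro a ha
          simp only [Finset.mem_Icc] at ha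
          rw [← zpow_natCast ζ, ← zpow_add₀ hζ0]
          congr 1
          omega
    _ = ζ ^ (-(n:ℤ)) * ∑ i ∈ Finset.range (2*n+1), ζ ^ i := by rw [Finset.mul_sum]
    _ = 0 := by rw [geom_sum_eq hζ1, hpow]; simp

/-- Every exponential `e^{ikt}` with `|k| ≤ n` is the linear combination of the translates
`φ_n(· - 2πj/(2n+1))`, `j = -n, …, n`, with coefficients
`e^{2πijk/(2n+1)} / ((2n+1)·cos(kπ/(2n+2)))`. -/
theorem stmt6 (n : ℕ) (k : ℤ) (hk : |k| ≤ (n : ℤ)) (t : ℝ) :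
    Complex.exp (Complex.I * (k : ℂ) * (t : ℂ)) =
      ∑ j ∈ Finset.Icc (-(n : ℤ)) (n : ℤ),
        (Complex.exp (2 * (Real.pi : ℂ) * Complex.I * (j : ℂ) * (k : ℂ) / (2*(n : ℂ)+1)) /
            ((2*(n : ℂ)+1) * ((Real.cos (((k : ℝ) * Real.pi) / (2*(n : ℝ)+2))) : ℂ))) *
          phi n (t - 2*Real.pi*(j : ℝ)/(2*(n : ℝ)+1)) := by
  have hk1 := (abs_le.mp hk).1
  have hk2 := (abs_le.mp hk).2
  have hπ := Real.pi_pos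
  have hden : (0:ℝ) < 2*(n:ℝ)+2 := by positivity
  have habs : |(k:ℝ)*π/(2*(n:ℝ)+2)| < π/2 := by
    rw [abs_div, abs_mul, abs_of_pos hπ, abs_of_pos hden, div_lt_iff₀ hden]
    have hkr : |(k:ℝ)| ≤ n := by exact_mod_cast hk
    nlinarith
  obtain ⟨h1, h2⟩ := abs_lt.mp habs
  have hcos : Real.cos ((k:ℝ)*π/(2*(n:ℝ)+2)) ≠ 0 :=
    ne_of_gt (Real.cos_pos_of_mem_Ioo ⟨h1, h2⟩)
  have hcosC : ((Real.cos ((k:ℝ)*π/(2*(n:ℝ)+2)) : ℝ) : ℂ) ≠ 0 := by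
    exact_mod_cast hcos
  have hne : (2*(n:ℂ)+1) ≠ 0 := by
    have : ((2*n+1 : ℕ) : ℂ) ≠ 0 := Nat.cast_ne_zero.mpr (by omega)
    convert this using 1; push_cast; ring
  symm
  simp only [phi, Finset.mul_sum]
  rw [Finset.sum_comm]
  have main : ∀ m : ℤ,
      (∑ j ∈ Finset.Icc (-(n:ℤ)) (n:ℤ),
        Complex.exp (2 * (Real.pi : ℂ) * Complex.I * (j : ℂ) * (k : ℂ) / (2*(n : ℂ)+1)) /
            ((2*(n : ℂ)+1) * ((Real.cos (((k : ℝ) * Real.pi) / (2*(n : ℝ)+2))) : ℂ)) *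
          (Complex.exp (Complex.I * (m : ℂ) * ((t - 2*Real.pi*(j:ℝ)/(2*(n:ℝ)+1) : ℝ) : ℂ)) *
            ((Real.cos (((m : ℝ) * Real.pi) / (2*(n : ℝ)+2))) : ℂ)))
      = (Complex.exp (Complex.I * (m : ℂ) * (t : ℂ)) *
            ((Real.cos (((m : ℝ) * Real.pi) / (2*(n : ℝ)+2))) : ℂ) /
            ((2*(n : ℂ)+1) * ((Real.cos (((k : ℝ) * Real.pi) / (2*(n : ℝ)+2))) : ℂ))) *
          ∑ j ∈ Finset.Icc (-(n:ℤ)) (n:ℤ),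
            Complex.exp (2*(π:ℂ)*Complex.I*(j:ℂ)*((k:ℂ)-(m:ℂ))/(2*(n:ℂ)+1)) := by
    intro m
    rw [Finset.mul_sum]
    refine Finset.sum_congr rfl fun j _ => ?_
    push_cast
    rw [show Complex.I * (m:ℂ) * ((t:ℂ) - 2*(π:ℂ)*(j:ℂ)/(2*(n:ℂ)+1))
        = (Complex.I * (m:ℂ) * (t:ℂ)) + (-(2*(π:ℂ)*Complex.I*(j:ℂ)*(m:ℂ)/(2*(n:ℂ)+1))) from by
        ring, Complex.exp_add]
    rw [show 2*(π:ℂ)*Complex.I*(j:ℂ)*((k:ℂ)-(m:ℂ))/(2*(n:ℂ)+1)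
        = (2*(π:ℂ)*Complex.I*(j:ℂ)*(k:ℂ)/(2*(n:ℂ)+1))
          + (-(2*(π:ℂ)*Complex.I*(j:ℂ)*(m:ℂ)/(2*(n:ℂ)+1))) from by ring, Complex.exp_add]
    ring
  rw [Finset.sum_congr rfl fun m _ => main m]
  rw [Finset.sum_eq_single_of_mem k (by simp only [Finset.mem_Icc]; omega)]
  · simp only [sub_self, mul_zero, zero_div, Complex.exp_zero, Finset.sum_const,
      Int.card_Icc, nsmul_eq_mul, mul_one]
    have hcard : ((n:ℤ) + 1 - -(n:ℤ)).toNat = 2*n+1 := by omega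
    rw [hcard]
    have hcast : ((2*n+1 : ℕ):ℂ) = 2*(n:ℂ)+1 := by push_cast; ring
    rw [hcast, mul_comm (2*(n:ℂ)+1) ((Real.cos (((k:ℝ)*π)/(2*(n:ℝ)+2)) : ℂ)), ← div_div,
      div_mul_cancel₀ _ hne, mul_div_cancel_right₀ _ hcosC]
  · intro m hm hmk
    have hd : k - m ≠ 0 := sub_ne_zero.mpr (Ne.symm hmk)
    have hd2 : (k - m).natAbs ≤ 2*n := by
      simp only [Finset.mem_Icc] at hm; omega
    have := roots_sum n (k - m) hd hd2
    push_cast at this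
    rw [this, mul_zero]
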